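/- Let A, B, C be real normed vector spaces and v ∈ A ⊗ B ⊗ C (algebraic tensor product). Then the minimal subspace U_A(v) can be computed by first contracting to the block A ⊗ B and then contracting within the block using only continuous functionals: U_A(v) = span{(id_A ⊗ ψ)(w) : w ∈ U_{AB}(v), ψ ∈ B^* continuous}, where (id_A ⊗ ψ) : A ⊗ B → A is the linear map sending x ⊗ y to ψ(y) • x and U_A(v), U_{AB}(v) are the minimal subspaces defined with algebraic dual functionals. -/

import Mathlib

open scoped TensorProduct

section
variable (𝕜 : Type*) [Field 𝕜]

/-- The contraction `id_V ⊗ φ : V ⊗ W → V`, sending `x ⊗ y` to `φ(y) • x`. -/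
noncomputable def rContract (V W : Type*) [AddCommGroup V] [Module 𝕜 V]
    [AddCommGroup W] [Module 𝕜 W] (φ : W →ₗ[𝕜] 𝕜) : V ⊗[𝕜] W →ₗ[𝕜] V :=
  (TensorProduct.rid 𝕜 V).toLinearMap ∘ₗ TensorProduct.map LinearMap.id φ

/-- The contraction `ψ ⊗ id_W : V ⊗ W → W`, sending `x ⊗ y` to `ψ(x) • y`. -/
noncomputable def lContract (V W : Type*) [AddCommGroup V] [Module 𝕜 V]
    [AddCommGroup W] [Module 𝕜 W] (ψ : V →ₗ[𝕜] 𝕜) : V ⊗[𝕜] W →ₗ[𝕜] W :=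
  (TensorProduct.lid 𝕜 W).toLinearMap ∘ₗ TensorProduct.map ψ LinearMap.id

/-- The left minimal subspace `U_V(v)` of `v ∈ V ⊗ W`: the span of all contractions
`(id_V ⊗ φ)(v)` with `φ` in the algebraic dual of `W`. -/
noncomputable def leftMin (V W : Type*) [AddCommGroup V] [Module 𝕜 V]
    [AddCommGroup W] [Module 𝕜 W] (v : V ⊗[𝕜] W) : Submodule 𝕜 V :=
  Submodule.span 𝕜 {x | ∃ φ : W →ₗ[𝕜] 𝕜, rContract 𝕜 V W φ v = x}

/-- The right minimal subspace `U_W(v)` of `v ∈ V ⊗ W`: the span of all contractions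
`(ψ ⊗ id_W)(v)` with `ψ` in the algebraic dual of `V`. -/
noncomputable def rightMin (V W : Type*) [AddCommGroup V] [Module 𝕜 V]
    [AddCommGroup W] [Module 𝕜 W] (v : V ⊗[𝕜] W) : Submodule 𝕜 W :=
  Submodule.span 𝕜 {y | ∃ ψ : V →ₗ[𝕜] 𝕜, lContract 𝕜 V W ψ v = y}

end

section
variable (𝕜 A B C : Type*) [Field 𝕜] [AddCommGroup A] [Module 𝕜 A]
  [AddCommGroup B] [Module 𝕜 B] [AddCommGroup C] [Module 𝕜 C]

/-- The minimal subspace `U_{AB}(v) ≤ A ⊗ B` of `v ∈ (A ⊗ B) ⊗ C`. -/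
noncomputable def minAB (v : (A ⊗[𝕜] B) ⊗[𝕜] C) : Submodule 𝕜 (A ⊗[𝕜] B) :=
  leftMin 𝕜 (A ⊗[𝕜] B) C v

/-- The minimal subspace `U_A(v) ≤ A` of `v ∈ (A ⊗ B) ⊗ C`, obtained by contracting
`B ⊗ C` via the associativity isomorphism. -/
noncomputable def minA (v : (A ⊗[𝕜] B) ⊗[𝕜] C) : Submodule 𝕜 A :=
  leftMin 𝕜 A (B ⊗[𝕜] C) (TensorProduct.assoc 𝕜 A B C v)

/-- The minimal subspace `U_B(v) ≤ B` of `v ∈ (A ⊗ B) ⊗ C`, obtained by contracting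
the factors `A` and `C`. -/
noncomputable def minB (v : (A ⊗[𝕜] B) ⊗[𝕜] C) : Submodule 𝕜 B :=
  Submodule.span 𝕜
    {y | ∃ (ψ : A →ₗ[𝕜] 𝕜) (φ : C →ₗ[𝕜] 𝕜),
      lContract 𝕜 A B ψ (rContract 𝕜 (A ⊗[𝕜] B) C φ v) = y}

end

section Helpers

variable {𝕜 : Type*} [Field 𝕜] {V W : Type*} [AddCommGroup V] [Module 𝕜 V]
  [AddCommGroup W] [Module 𝕜 W]

lemma rContract_tmul (φ : W →ₗ[𝕜] 𝕜) (x : V) (y : W) :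
    rContract 𝕜 V W φ (x ⊗ₜ[𝕜] y) = φ y • x := by
  simp [rContract]

lemma lContract_tmul (ψ : V →ₗ[𝕜] 𝕜) (x : V) (y : W) :
    lContract 𝕜 V W ψ (x ⊗ₜ[𝕜] y) = ψ x • y := by
  simp [lContract]

lemma basisCoeff_eq {ι : Type*} [DecidableEq ι] (b : Module.Basis ι 𝕜 W) (v : V ⊗[𝕜] W) (j : ι) :
    ((TensorProduct.congr (LinearEquiv.refl 𝕜 V) b.repr).trans
      (TensorProduct.finsuppScalarRight 𝕜 𝕜 V ι)) v j = rContract 𝕜 V W (b.coord j) v := by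
  induction v with
  | zero => simp
  | tmul x y =>
      simp [TensorProduct.congr_tmul, TensorProduct.finsuppScalarRight_apply_tmul_apply,
        rContract_tmul, Module.Basis.coord_apply]
  | add x y hx hy =>
      simp only [map_add, Finsupp.add_apply, LinearEquiv.trans_apply] at hx hy ⊢
      rw [hx, hy]

lemma repr_sum {ι : Type*} (b : Module.Basis ι 𝕜 W) (v : V ⊗[𝕜] W) :
    ∃ s : Finset ι, v = ∑ j ∈ s, (rContract 𝕜 V W (b.coord j) v) ⊗ₜ[𝕜] b j := by
  classical
  set E := ((TensorProduct.congr (LinearEquiv.refl 𝕜 V) b.repr).trans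
      (TensorProduct.finsuppScalarRight 𝕜 𝕜 V ι)) with hE
  refine ⟨(E v).support, E.injective ?_⟩
  rw [map_sum]
  symm
  have hsingle : ∀ (t : V) (j : ι), E (t ⊗ₜ[𝕜] b j) = Finsupp.single j t := by
    intro t j
    ext i
    simp [hE, TensorProduct.finsuppScalarRight_apply_tmul_apply, Finsupp.single_apply,
      ite_smul, eq_comm]
  calc (E v).support.sum (fun j => E ((rContract 𝕜 V W (b.coord j) v) ⊗ₜ[𝕜] b j))
      = (E v).support.sum (fun j => Finsupp.single j (E v j)) := by
        refine Finset.sum_congr rfl fun j _ => ?_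
        rw [hsingle, basisCoeff_eq]
    _ = E v := by rw [← Finsupp.sum, Finsupp.sum_single]

lemma rContract_rContract {A B C : Type*} [AddCommGroup A] [Module 𝕜 A]
    [AddCommGroup B] [Module 𝕜 B] [AddCommGroup C] [Module 𝕜 C]
    (ψ : B →ₗ[𝕜] 𝕜) (φ : C →ₗ[𝕜] 𝕜) (t : (A ⊗[𝕜] B) ⊗[𝕜] C) :
    rContract 𝕜 A B ψ (rContract 𝕜 (A ⊗[𝕜] B) C φ t)
      = rContract 𝕜 A (B ⊗[𝕜] C) (φ ∘ₗ lContract 𝕜 B C ψ)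
          (TensorProduct.assoc 𝕜 A B C t) := by
  have h : (rContract 𝕜 A B ψ) ∘ₗ (rContract 𝕜 (A ⊗[𝕜] B) C φ)
      = (rContract 𝕜 A (B ⊗[𝕜] C) (φ ∘ₗ lContract 𝕜 B C ψ)) ∘ₗ
          (TensorProduct.assoc 𝕜 A B C).toLinearMap := by
    apply TensorProduct.ext_threefold
    intro a b c
    simp [rContract_tmul, lContract_tmul, smul_smul, mul_comm]
  exact LinearMap.congr_fun h t

lemma exists_continuous_extension {B : Type*} [NormedAddCommGroup B] [NormedSpace ℝ B]
    (f : B →ₗ[ℝ] ℝ) (s : Finset B) :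
    ∃ ψ : B →L[ℝ] ℝ, ∀ x ∈ s, ψ x = f x := by
  set p : Submodule ℝ B := Submodule.span ℝ (s : Set B) with hp
  haveI : FiniteDimensional ℝ p := FiniteDimensional.span_finset ℝ s
  obtain ⟨g, hg, -⟩ := exists_extension_norm_eq p
    (LinearMap.toContinuousLinearMap (f.domRestrict p))
  refine ⟨g, fun x hx => ?_⟩
  have := hg ⟨x, Submodule.subset_span hx⟩
  simpa using this

end Helpers

section
variable {A B C : Type*} [NormedAddCommGroup A] [NormedSpace ℝ A]
  [NormedAddCommGroup B] [NormedSpace ℝ B] [NormedAddCommGroup C] [NormedSpace ℝ C]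

/-- **Hierarchical computation of minimal subspaces with continuous functionals.**
For normed spaces `A`, `B`, `C` and `v ∈ A ⊗ B ⊗ C` (algebraic tensor product), the
minimal subspace `U_A(v)` (defined with algebraic duals) equals the span of the
contractions `(id_A ⊗ ψ)(w)` of elements `w ∈ U_{AB}(v)` by *continuous* functionals
`ψ ∈ B^*`. -/
theorem minA_eq_span_continuous_contractions_of_minAB (v : (A ⊗[ℝ] B) ⊗[ℝ] C) :
    minA ℝ A B C v =
      Submodule.span ℝ
        {x | ∃ w ∈ minAB ℝ A B C v, ∃ ψ : B →L[ℝ] ℝ,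
          rContract ℝ A B (ψ : B →ₗ[ℝ] ℝ) w = x} := by
  classical
  apply le_antisymm
  · -- hard direction
    rw [minA, leftMin]
    refine Submodule.span_le.2 ?_
    rintro x ⟨χ, rfl⟩
    set S := {x | ∃ w ∈ minAB ℝ A B C v, ∃ ψ : B →L[ℝ] ℝ,
          rContract ℝ A B (ψ : B →ₗ[ℝ] ℝ) w = x} with hS
    set bB := Module.Basis.ofVectorSpace ℝ B with hbB
    set bC := Module.Basis.ofVectorSpace ℝ C with hbC
    obtain ⟨s, hs⟩ := repr_sum bC v
    set t : _ → A ⊗[ℝ] B := fun j => rContract ℝ (A ⊗[ℝ] B) C (bC.coord j) v with ht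
    have htmem : ∀ j, t j ∈ minAB ℝ A B C v := fun j =>
      Submodule.subset_span ⟨bC.coord j, rfl⟩
    have key : ∀ j, rContract ℝ A (B ⊗[ℝ] C) χ
        (TensorProduct.assoc ℝ A B C ((t j) ⊗ₜ[ℝ] bC j)) ∈ Submodule.span ℝ S := by
      intro j
      obtain ⟨sB, hsB⟩ := repr_sum bB (t j)
      set α : _ → A := fun m => rContract ℝ A B (bB.coord m) (t j) with hα
      have hαmem : ∀ m ∈ sB, α m ∈ S := by
        intro m hm
        obtain ⟨ψ, hψ⟩ := exists_continuous_extension (bB.coord m) (sB.image bB)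
        refine ⟨t j, htmem j, ψ, ?_⟩
        have := congrArg (rContract ℝ A B (ψ : B →ₗ[ℝ] ℝ)) hsB
        rw [this, map_sum]
        have hterm : ∀ m' ∈ sB,
            rContract ℝ A B (ψ : B →ₗ[ℝ] ℝ) ((α m') ⊗ₜ[ℝ] bB m')
              = (if m' = m then (1:ℝ) else 0) • α m' := by
          intro m' hm'
          rw [rContract_tmul]
          congr 1
          have h1 : (ψ : B →ₗ[ℝ] ℝ) (bB m') = bB.coord m (bB m') :=
            hψ (bB m') (Finset.mem_image_of_mem bB hm')
          rw [h1, Module.Basis.coord_apply, Module.Basis.repr_self, Finsupp.single_apply]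
        rw [Finset.sum_congr rfl hterm]
        simp only [ite_smul, one_smul, zero_smul]
        rw [Finset.sum_ite_eq' sB m α, if_pos hm]
      have hrw : TensorProduct.assoc ℝ A B C ((t j) ⊗ₜ[ℝ] bC j)
          = ∑ m ∈ sB, (α m) ⊗ₜ[ℝ] ((bB m) ⊗ₜ[ℝ] bC j) := by
        rw [hsB, TensorProduct.sum_tmul, map_sum]
        exact Finset.sum_congr rfl fun m _ => TensorProduct.assoc_tmul _ _ _
      rw [hrw, map_sum]
      refine Submodule.sum_mem _ fun m hm => ?_
      rw [rContract_tmul]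
      exact Submodule.smul_mem _ _ (Submodule.subset_span (hαmem m hm))
    have hv : rContract ℝ A (B ⊗[ℝ] C) χ (TensorProduct.assoc ℝ A B C v)
        = ∑ j ∈ s, rContract ℝ A (B ⊗[ℝ] C) χ
            (TensorProduct.assoc ℝ A B C ((t j) ⊗ₜ[ℝ] bC j)) := by
      conv_lhs => rw [hs]
      rw [map_sum, map_sum]
    rw [hv]
    exact Submodule.sum_mem _ fun j _ => key j
  · refine Submodule.span_le.2 ?_
    rintro x ⟨w, hw, ψ, rfl⟩
    simp only [minAB, leftMin] at hw
    induction hw using Submodule.span_induction with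
    | mem w hw =>
        obtain ⟨φ, rfl⟩ := hw
        rw [rContract_rContract]
        exact Submodule.subset_span ⟨_, rfl⟩
    | zero => rw [map_zero]; exact Submodule.zero_mem _
    | add a b _ _ ha hb => rw [map_add]; exact Submodule.add_mem _ ha hb
    | smul c a _ ha => rw [map_smul]; exact Submodule.smul_mem _ _ ha


end
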